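/- Let S → P¹ be a conic bundle with at least one singular fiber, K the canonical class, f the class of a fiber. Suppose C = −aK + bf (a, b ∈ Z) is the class of the fibers of a second conic bundle structure on S with fibers different from those of the first, i.e. C² = 0, −K·C = 2, C·f > 0. Then b = −1 and a·K² = 4; in particular K² ∈ {1, 2, 4}. -/
import Mathlib

/-- On a conic bundle `S → ℙ¹` with at least one singular fiber (`k ≥ 1`,
`K² = 8 - k`, `K·f = -2`, `f² = 0`), if `C = -a•K + b•f` is the class of the
fibers of a second conic bundle structure (so `C² = 0`, `K·C = -2`, i.e.
`-K·C = 2`) with fibers different from the first (`C·f > 0`), then `b = -1`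
and `a·K² = 4`; in particular `K² ∈ {1, 2, 4}`. -/
theorem stmt_9 (Pic : Type) [AddCommGroup Pic]
    (inter : Pic →ₗ[ℤ] Pic →ₗ[ℤ] ℤ)
    (hsymm : ∀ x y, inter x y = inter y x)
    (K f C : Pic) (k : ℤ) (hk : 1 ≤ k)
    (hKK : inter K K = 8 - k) (hKf : inter K f = -2) (hff : inter f f = 0)
    (a b : ℤ) (hC : C = (-a) • K + b • f)
    (hC2 : inter C C = 0) (hKC : inter K C = -2) (hCf : 0 < inter C f) :
    b = -1 ∧ a * (8 - k) = 4 ∧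
      (inter K K = 1 ∨ inter K K = 2 ∨ inter K K = 4) := by
  have hfK : inter f K = -2 := by rw [hsymm]; exact hKf
  subst hC
  simp only [map_add, map_smul, LinearMap.add_apply, LinearMap.smul_apply,
    hKK, hKf, hfK, hff, smul_eq_mul] at hC2 hKC hCf
  -- hCf : 0 < -a * -2 + b * 0, so a ≥ 1
  have ha : 1 ≤ a := by nlinarith
  have hb : b = -1 := by nlinarith
  subst hb
  have h4 : a * (8 - k) = 4 := by nlinarith
  refine ⟨rfl, h4, ?_⟩
  rw [hKK]
  -- a * (8-k) = 4, a ≥ 1, so 8-k ∈ {1,2,4}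
  obtain ⟨m, hm⟩ : ∃ m, 8 - k = m := ⟨8 - k, rfl⟩
  rw [hm] at h4 ⊢
  have h8 : m ≤ 4 := by nlinarith
  have h1 : 1 ≤ m := by nlinarith
  interval_cases m <;> omega
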